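/- Let M be a loopless matroid of rank d+1 on a finite ground set, and let J ⊆ J' be two subsets of {1,...,d}. Then N_J(M) · U_{J'} ≤ N_{J'}(M) · U_J, where for a subset K ⊆ {1,...,d} with block sizes n_1, ..., n_{m+1}, U_K = (d+1)! · n_{m+1} / (n_1! · n_2! ⋯ n_{m+1}!) is the number of such chains of flats in the Boolean matroid of rank d+1. -/

import Mathlib

open Finset Polynomial

/-- Block sizes of an index set `J ⊆,{1,…,d}`: differences of consecutive elements of
`{0} ∪ J ∪ {d+2}` in increasing order. -/
def blockSizes (d : ℕ) (J : Finset ℕ) : List ℕ :=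
  let L := (insert 0 (insert (d + 2) J)).sort (· ≤ ·)
  L.tail.zipWith (· - ·) L

/-- The rank of a set in a matroid: the supremum of cardinalities of independent subsets. -/
noncomputable def mrank {α : Type*} (M : Matroid α) (X : Set α) : ℕ :=
  sSup {n : ℕ | ∃ I, M.Indep I ∧ I ⊆ X ∧ I.ncard = n}

/-- A loopless matroid: every singleton of the ground set is independent. -/
def MLoopless {α : Type*} (M : Matroid α) : Prop := ∀ e ∈ M.E, M.Indep {e}

/-- `flagCount M J` : the number of chains of flats of `M` whose ranks are exactly
the elements of `J`, in increasing order. -/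
noncomputable def flagCount {α : Type*} (M : Matroid α) (J : Finset ℕ) : ℕ :=
  Nat.card {F : J → Set α // StrictMono F ∧ ∀ j : J, M.IsFlat (F j) ∧ mrank M (F j) = (j : ℕ)}

/-- The Chow polynomial of a matroid of rank `d+1`, via the Feichtner–Yuzvinsky
flag formula. -/
noncomputable def chowPoly {α : Type*} (M : Matroid α) (d : ℕ) : Polynomial ℝ :=
  ∑ J ∈ (Finset.Icc 1 d).powerset,
    (flagCount M J : ℝ) •
      ((X : Polynomial ℝ) ^ J.card *
        ((blockSizes d J).map (fun n => ∑ j ∈ Finset.range (n - 1), (X : Polynomial ℝ) ^ j)).prod)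

/-- The number of descents of a permutation of `Fin n`. -/
def descentCount {n : ℕ} (σ : Equiv.Perm (Fin n)) : ℕ :=
  (Finset.univ.filter fun i : Fin n =>
    ∃ h : (i : ℕ) + 1 < n, σ ⟨(i : ℕ) + 1, h⟩ < σ i).card

/-- The Eulerian number `A(n,k)`: the number of permutations of `{1,…,n}` with
exactly `k` descents. -/
def eulerian (n k : ℕ) : ℕ :=
  (Finset.univ.filter fun σ : Equiv.Perm (Fin n) => descentCount σ = k).card

/-- `U_J = (d+1)! · n_{m+1} / (n_1! ⋯ n_{m+1}!)`, the number of chains of flats of ranks `J`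
in the Boolean matroid of rank `d+1`. -/
noncomputable def boolFlagCount (d : ℕ) (J : Finset ℕ) : ℚ :=
  (Nat.factorial (d + 1) : ℚ) * ((blockSizes d J).getLastD 1 : ℚ) /
    (((blockSizes d J).map Nat.factorial).prod : ℚ)

namespace S12

open Matroid Set



variable {α : Type*} {M : Matroid α}

lemma indep_finite (hfin : M.Finite) {I : Set α} (hI : M.Indep I) : I.Finite :=
  hfin.ground_finite.subset hI.subset_ground

lemma mrank_basis (hfin : M.Finite) {I X : Set α} (hI : M.IsBasis I X) :
    mrank M X = I.ncard := by
  apply le_antisymm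
  · refine csSup_le ⟨0, Set.mem_setOf.mpr ⟨∅, M.empty_indep, empty_subset _, by simp⟩⟩ ?_
    rintro n ⟨K, hK, hKX, rfl⟩
    obtain ⟨K', hK', hKK'⟩ := hK.subset_isBasis_of_subset hKX hI.subset_ground
    have h1 : K'.encard = I.encard := hK'.encard_eq_encard hI
    have h2 : K.ncard ≤ K'.ncard :=
      Set.ncard_le_ncard hKK' (indep_finite hfin hK'.indep)
    rwa [Set.ncard_def K', h1, ← Set.ncard_def] at h2
  · apply le_csSup
    · refine ⟨M.E.ncard, ?_⟩
      rintro n ⟨K, hK, hKX, rfl⟩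
      exact Set.ncard_le_ncard hK.subset_ground hfin.ground_finite
    · exact ⟨I, hI.indep, hI.subset, rfl⟩

lemma mrank_closure_indep (hfin : M.Finite) {I : Set α} (hI : M.Indep I) :
    mrank M (M.closure I) = I.ncard :=
  mrank_basis hfin hI.isBasis_closure

lemma mrank_closure_empty (hfin : M.Finite) : mrank M (M.closure ∅) = 0 := by
  simpa using mrank_closure_indep hfin M.empty_indep

lemma flat_closure_eq {F I : Set α} (hF : M.IsFlat F) (hI : M.IsBasis I F) :
    M.closure I = F := by
  rw [hI.closure_eq_closure, hF.closure]



def diffs (l : List ℕ) : List ℕ := l.tail.zipWith (· - ·) l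

@[simp] lemma diffs_nil : diffs [] = [] := rfl
@[simp] lemma diffs_single (x : ℕ) : diffs [x] = [] := rfl
@[simp] lemma diffs_cons_cons (x y : ℕ) (l : List ℕ) :
    diffs (x :: y :: l) = (y - x) :: diffs (y :: l) := rfl

lemma diffs_append (xs : List ℕ) (y : ℕ) (ys : List ℕ) :
    diffs (xs ++ y :: ys) = diffs (xs ++ [y]) ++ diffs (y :: ys) := by
  induction xs with
  | nil => simp
  | cons x xs ih =>
    cases xs with
    | nil => simp
    | cons x' xs' => simpa using ih

lemma blockSizes_eq (d : ℕ) (J : Finset ℕ) :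
    blockSizes d J = diffs ((insert 0 (insert (d + 2) J)).sort (· ≤ ·)) := rfl

lemma getLastD_append (xs : List ℕ) (y : ℕ) (ys : List ℕ) (k : ℕ) :
    (xs ++ y :: ys).getLastD k = (y :: ys).getLastD k := by
  rw [List.getLastD_eq_getLast?, List.getLastD_eq_getLast?,
    List.getLast?_append_of_ne_nil _ (List.cons_ne_nil y ys)]


lemma pos_of_mem_diffs {l : List ℕ} (hl : l.Pairwise (· < ·)) {x : ℕ}
    (hx : x ∈ diffs l) : 0 < x := by
  induction l with
  | nil => simp [diffs] at hx
  | cons a l ih =>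
    cases l with
    | nil => simp [diffs] at hx
    | cons b l' =>
      rw [diffs_cons_cons] at hx
      rcases List.mem_cons.mp hx with h | h
      · have : a < b := (List.pairwise_cons.mp hl).1 b (List.mem_cons_self)
        omega
      · exact ih (List.pairwise_cons.mp hl).2 h

lemma getLastD_pos {l : List ℕ} (h : ∀ x ∈ l, 0 < x) : 0 < l.getLastD 1 := by
  induction l with
  | nil => simp
  | cons a l ih =>
    cases l with
    | nil => simpa using h a (List.mem_cons_self)
    | cons b l' =>
      have := ih (fun x hx => h x (List.mem_cons_of_mem _ hx))
      simpa [List.getLastD_cons] using this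

lemma sorted_decomp {l : List ℕ} (hl : l.Pairwise (· < ·)) {a b : ℕ}
    (ha : a ∈ l) (hb : b ∈ l) (hab : a < b) (hgap : ∀ x ∈ l, ¬(a < x ∧ x < b)) :
    ∃ l₁ l₂, l = l₁ ++ a :: b :: l₂ := by
  induction l with
  | nil => simp at ha
  | cons x t ih =>
    have hs := List.pairwise_cons.mp hl
    rcases List.mem_cons.mp ha with rfl | hat
    · have hbt : b ∈ t := by
        rcases List.mem_cons.mp hb with rfl | h
        · omega
        · exact h
      cases t with
      | nil => simp at hbt
      | cons y t' =>
        have hay : a < y := hs.1 y (List.mem_cons_self)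
        have hyb : y = b := by
          rcases List.mem_cons.mp hbt with rfl | h
          · rfl
          · have : y < b := ((List.pairwise_cons.mp hs.2).1) b h
            exact absurd ⟨hay, this⟩ (hgap y (by simp))
        exact ⟨[], t', by subst hyb; rfl⟩
    · have hxa : x < a := hs.1 a hat
      have hbt : b ∈ t := by
        rcases List.mem_cons.mp hb with rfl | h
        · omega
        · exact h
      obtain ⟨l₁, l₂, rfl⟩ := ih hs.2 hat hbt
        (fun z hz => hgap z (List.mem_cons_of_mem _ hz))
      exact ⟨x :: l₁, l₂, rfl⟩

lemma bool_pos (d : ℕ) (J : Finset ℕ) : 0 < boolFlagCount d J := by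
  unfold boolFlagCount
  apply div_pos
  · apply mul_pos
    · exact_mod_cast Nat.cast_pos.mpr (Nat.factorial_pos (d+1))
    · have : 0 < (blockSizes d J).getLastD 1 := by
        apply getLastD_pos
        intro x hx
        exact pos_of_mem_diffs ((Finset.sortedLT_sort _).pairwise) (by rwa [blockSizes_eq] at hx)
      exact_mod_cast this
  · have : 0 < ((blockSizes d J).map Nat.factorial).prod := by
      apply List.prod_pos
      intro x hx
      obtain ⟨y, _, rfl⟩ := List.mem_map.mp hx
      exact Nat.factorial_pos y
    exact_mod_cast this

variable {d j a b : ℕ} {J : Finset ℕ}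

lemma insert_decomp (hJ : ∀ x ∈ J, 1 ≤ x ∧ x ≤ d)
    (hj1 : 1 ≤ j) (hjd : j ≤ d) (hjJ : j ∉ J)
    (haJ : a ∈ insert 0 J) (haj : a < j)
    (hbJ : b ∈ insert (d+2) J) (hjb : j < b)
    (hamax : ∀ x ∈ insert 0 J, x < j → x ≤ a)
    (hbmin : ∀ x ∈ insert (d+2) J, j < x → b ≤ x) :
    ∃ l₁ l₂ : List ℕ, (insert 0 (insert (d+2) J)).sort (· ≤ ·) = l₁ ++ a :: b :: l₂ ∧
      (insert 0 (insert (d+2) (insert j J))).sort (· ≤ ·) = l₁ ++ a :: j :: b :: l₂ := by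
  classical
  set A := insert 0 (insert (d+2) J) with hA
  have haA : a ∈ A := by
    rcases Finset.mem_insert.mp haJ with rfl | h
    · exact Finset.mem_insert_self _ _
    · exact Finset.mem_insert_of_mem (Finset.mem_insert_of_mem h)
  have hbA : b ∈ A := by
    rcases Finset.mem_insert.mp hbJ with rfl | h
    · exact Finset.mem_insert_of_mem (Finset.mem_insert_self _ _)
    · exact Finset.mem_insert_of_mem (Finset.mem_insert_of_mem h)
  have hjA : j ∉ A := by
    simp only [hA, Finset.mem_insert]
    push_neg
    exact ⟨by omega, by omega, hjJ⟩
  have hgap : ∀ x ∈ A, ¬(a < x ∧ x < b) := by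
    intro x hx ⟨h1, h2⟩
    rcases Finset.mem_insert.mp hx with rfl | hx
    · omega
    rcases Finset.mem_insert.mp hx with rfl | hx
    · have := hbmin (d+2) (Finset.mem_insert_self _ _) (by omega)
      omega
    · rcases lt_trichotomy x j with h | h | h
      · have := hamax x (Finset.mem_insert_of_mem hx) h
        omega
      · exact hjJ (h ▸ hx)
      · have := hbmin x (Finset.mem_insert_of_mem hx) h
        omega
  obtain ⟨l₁, l₂, hL⟩ := sorted_decomp ((Finset.sortedLT_sort A).pairwise)
    ((Finset.mem_sort _).mpr haA) ((Finset.mem_sort _).mpr hbA) (haj.trans hjb)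
    (fun x hx => hgap x ((Finset.mem_sort _).mp hx))
  refine ⟨l₁, l₂, hL, ?_⟩
  have hA' : insert 0 (insert (d+2) (insert j J)) = insert j A := by
    rw [hA, Finset.insert_comm j, Finset.insert_comm j]
  rw [hA']
  -- permutation
  have hp0 : List.Perm A.toList (l₁ ++ a :: b :: l₂) := by
    rw [← hL]; exact (Finset.sort_perm_toList _ _).symm
  have hperm : List.Perm ((insert j A).sort (· ≤ ·)) (l₁ ++ a :: j :: b :: l₂) := by
    refine ((Finset.sort_perm_toList _ _).trans ?_)
    refine (Finset.toList_insert hjA).trans ?_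
    refine (hp0.cons j).trans ?_
    have e1 : l₁ ++ a :: j :: b :: l₂ = (l₁ ++ [a]) ++ j :: (b :: l₂) := by simp
    have e2 : l₁ ++ a :: b :: l₂ = (l₁ ++ [a]) ++ (b :: l₂) := by simp
    rw [e1, e2]
    exact List.perm_middle.symm
  -- sortedness
  have hsorted : List.Pairwise (· < ·) (l₁ ++ a :: b :: l₂) := by
    rw [← hL]; exact (Finset.sortedLT_sort A).pairwise
  rw [List.pairwise_append] at hsorted
  obtain ⟨hs1, hs2, hcross⟩ := hsorted
  rw [List.pairwise_cons] at hs2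
  obtain ⟨ha2, hs2⟩ := hs2
  rw [List.pairwise_cons] at hs2
  obtain ⟨hb2, hs2⟩ := hs2
  have hsorted' : List.Pairwise (· < ·) (l₁ ++ a :: j :: b :: l₂) := by
    rw [List.pairwise_append]
    refine ⟨hs1, ?_, ?_⟩
    · rw [List.pairwise_cons]
      constructor
      · intro y hy
        rcases List.mem_cons.mp hy with rfl | hy
        · exact haj
        · exact ha2 y hy
      rw [List.pairwise_cons]
      constructor
      · intro y hy
        rcases List.mem_cons.mp hy with rfl | hy
        · exact hjb
        · exact (hjb.trans_le (le_of_lt (hb2 y hy)))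
      exact List.pairwise_cons.mpr ⟨hb2, hs2⟩
    · intro x hx y hy
      have hxa : x < a := hcross x hx a (List.mem_cons_self)
      rcases List.mem_cons.mp hy with rfl | hy
      · exact hxa
      rcases List.mem_cons.mp hy with rfl | hy
      · exact hxa.trans haj
      · exact hcross x hx y (List.mem_cons_of_mem _ hy)
  haveI : IsAntisymm ℕ (· < ·) := ⟨fun x y h1 h2 => absurd h1 (not_lt.mpr h2.le)⟩
  exact hperm.eq_of_pairwise' ((Finset.sortedLT_sort _).pairwise) hsorted'


variable {d j a b : ℕ} {J : Finset ℕ}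

lemma bool_step (hJ : ∀ x ∈ J, 1 ≤ x ∧ x ≤ d)
    (hj1 : 1 ≤ j) (hjd : j ≤ d) (hjJ : j ∉ J)
    (haJ : a ∈ insert 0 J) (haj : a < j)
    (hbJ : b ∈ insert (d+2) J) (hjb : j < b)
    (hamax : ∀ x ∈ insert 0 J, x < j → x ≤ a)
    (hbmin : ∀ x ∈ insert (d+2) J, j < x → b ≤ x) :
    boolFlagCount d (insert j J) =
      (Nat.choose (min (d+1) b - a) (j - a) : ℚ) * boolFlagCount d J := by
  obtain ⟨l₁, l₂, hL, hL'⟩ :=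
    insert_decomp hJ hj1 hjd hjJ haJ haj hbJ hjb hamax hbmin
  have hbd2 : b ≤ d + 2 := by
    rcases Finset.mem_insert.mp hbJ with rfl | h
    · omega
    · exact le_of_lt (by have := (hJ b h).2; omega)
  have h1 : blockSizes d J = diffs (l₁ ++ [a]) ++ (b - a) :: diffs (b :: l₂) := by
    rw [blockSizes_eq, hL]
    rw [show l₁ ++ a :: b :: l₂ = l₁ ++ a :: (b :: l₂) from rfl, diffs_append]
    simp
  have h2 : blockSizes d (insert j J) =
      diffs (l₁ ++ [a]) ++ (j - a) :: (b - j) :: diffs (b :: l₂) := by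
    rw [blockSizes_eq, hL']
    rw [show l₁ ++ a :: j :: b :: l₂ = l₁ ++ a :: (j :: b :: l₂) from rfl, diffs_append]
    simp
  -- abbreviations
  set P := ((diffs (l₁ ++ [a])).map Nat.factorial).prod with hP
  have hPpos : 0 < P := List.prod_pos (by
    intro x hx
    obtain ⟨y, _, rfl⟩ := List.mem_map.mp hx
    exact Nat.factorial_pos y)
  cases l₂ with
  | nil =>
    -- top case : b = d + 2
    have hbtop : b = d + 2 := by
      have hmem : (d+2) ∈ l₁ ++ a :: b :: ([] : List ℕ) := by
        rw [← hL, Finset.mem_sort]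
        exact Finset.mem_insert_of_mem (Finset.mem_insert_self _ _)
      have hsorted : List.Pairwise (· < ·) (l₁ ++ a :: b :: ([] : List ℕ)) := by
        rw [← hL]; exact (Finset.sortedLT_sort _).pairwise
      rw [List.pairwise_append] at hsorted
      rcases List.mem_append.mp hmem with h | h
      · have := hsorted.2.2 _ h b (by simp)
        omega
      · simp only [List.mem_cons, List.not_mem_nil, or_false] at h
        have hab2 : a < b := haj.trans hjb
        rcases h with rfl | rfl
        · omega
        · rfl
      -- done
    subst hbtop
    rw [boolFlagCount, boolFlagCount, h1, h2]
    simp only [diffs_single, List.map_append, List.prod_append, List.map_cons, List.map_nil,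
      List.prod_cons, List.prod_nil]
    rw [getLastD_append, getLastD_append]
    simp only [List.getLastD_cons, List.getLastD_nil]
    have hmin : min (d+1) (d+2) = d + 1 := by omega
    rw [hmin]
    -- ℚ identity
    have e1 : (d + 2 - a).factorial = (d + 2 - a) * (d + 1 - a).factorial := by
      have : d + 2 - a = (d + 1 - a) + 1 := by omega
      rw [this, Nat.factorial_succ]
    have e2 : (d + 2 - j).factorial = (d + 2 - j) * (d + 1 - j).factorial := by
      have : d + 2 - j = (d + 1 - j) + 1 := by omega
      rw [this, Nat.factorial_succ]
    have key : (Nat.choose (d + 1 - a) (j - a)) * ((j - a).factorial * (d + 1 - j).factorial)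
        = (d + 1 - a).factorial := by
      have hle : j - a ≤ d + 1 - a := by omega
      have := Nat.choose_mul_factorial_mul_factorial hle
      have hsub : d + 1 - a - (j - a) = d + 1 - j := by omega
      rw [hsub] at this
      rw [← this]; ring
    have e1Q : (((d+2-a).factorial : ℕ) : ℚ) = ((d+2-a : ℕ) : ℚ) * ((d+1-a).factorial : ℚ) := by
      exact_mod_cast congrArg (Nat.cast (R := ℚ)) e1
    have e2Q : (((d+2-j).factorial : ℕ) : ℚ) = ((d+2-j : ℕ) : ℚ) * ((d+1-j).factorial : ℚ) := by
      exact_mod_cast congrArg (Nat.cast (R := ℚ)) e2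
    have keyQ : (((d+1-a).factorial : ℕ) : ℚ)
        = ((Nat.choose (d+1-a) (j-a) : ℕ) : ℚ) * (((j-a).factorial : ℚ) * ((d+1-j).factorial : ℚ)) := by
      exact_mod_cast congrArg (Nat.cast (R := ℚ)) key.symm
    have hden1 : ((P * ((j - a).factorial * ((d + 2 - j).factorial * 1)) : ℕ) : ℚ) ≠ 0 := by
      have : 0 < P * ((j - a).factorial * ((d + 2 - j).factorial * 1)) := by positivity
      exact_mod_cast this.ne'
    have hden2 : ((P * ((d + 2 - a).factorial * 1) : ℕ) : ℚ) ≠ 0 := by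
      have : 0 < P * ((d + 2 - a).factorial * 1) := by positivity
      exact_mod_cast this.ne'
    rw [← mul_div_assoc, div_eq_div_iff hden1 hden2]
    push_cast
    rw [e1Q, e2Q, keyQ]
    ring
  | cons c l₂' =>
    -- middle case : b ≤ d + 1
    have hbne : b ≠ d + 2 := by
      intro rfl'
      have hsorted : List.Pairwise (· < ·) (l₁ ++ a :: b :: c :: l₂') := by
        rw [← hL]; exact (Finset.sortedLT_sort _).pairwise
      rw [List.pairwise_append] at hsorted
      have hbc : b < c := by
        have := hsorted.2.1
        rw [List.pairwise_cons] at this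
        have := this.2
        rw [List.pairwise_cons] at this
        exact this.1 c (by simp)
      have hcA : c ∈ insert 0 (insert (d+2) J) := by
        rw [← Finset.mem_sort (α := ℕ) (· ≤ ·), hL]
        simp
      have hcle : c ≤ d + 2 := by
        rcases Finset.mem_insert.mp hcA with rfl | h
        · omega
        rcases Finset.mem_insert.mp h with rfl | h
        · omega
        · have := (hJ c h).2; omega
      omega
    have hble : b ≤ d + 1 := by
      rcases Finset.mem_insert.mp hbJ with rfl | h
      · omega
      · have := (hJ b h).2; omega
    have hmin : min (d+1) b = b := by omega
    rw [hmin]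
    rw [boolFlagCount, boolFlagCount, h1, h2]
    simp only [List.map_append, List.prod_append, List.map_cons, List.prod_cons]
    rw [getLastD_append, getLastD_append]
    have hg : ∀ k k' : ℕ, (k :: (b - c + (c - b)) :: diffs (c :: l₂')).getLastD k' =
        ((b-c+(c-b)) :: diffs (c :: l₂')).getLastD k := by
      intro k k'; rw [List.getLastD_cons]
    -- getLastD of the two lists agree
    have hgl : ((j - a) :: (b - j) :: diffs (b :: c :: l₂')).getLastD 1
        = ((b - a) :: diffs (b :: c :: l₂')).getLastD 1 := by
      rw [List.getLastD_cons, List.getLastD_cons, List.getLastD_cons]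
      rfl
    rw [hgl]
    set g : ℚ := (((b - a) :: diffs (b :: c :: l₂')).getLastD 1 : ℚ) with hgdef
    have key : (Nat.choose (b - a) (j - a)) * ((j - a).factorial * (b - j).factorial)
        = (b - a).factorial := by
      have hle : j - a ≤ b - a := by omega
      have := Nat.choose_mul_factorial_mul_factorial hle
      have hsub : b - a - (j - a) = b - j := by omega
      rw [hsub] at this
      rw [← this]; ring
    have cQ : 0 < ((diffs (b :: c :: l₂')).map Nat.factorial).prod := List.prod_pos (by
      intro x hx
      obtain ⟨y, _, rfl⟩ := List.mem_map.mp hx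
      exact Nat.factorial_pos y)
    have keyQ : (((b-a).factorial : ℕ) : ℚ)
        = ((Nat.choose (b-a) (j-a) : ℕ) : ℚ) * (((j-a).factorial : ℚ) * ((b-j).factorial : ℚ)) := by
      exact_mod_cast congrArg (Nat.cast (R := ℚ)) key.symm
    have hden1 : ((P * ((j - a).factorial * ((b - j).factorial *
        ((diffs (b :: c :: l₂')).map Nat.factorial).prod)) : ℕ) : ℚ) ≠ 0 := by
      have : 0 < P * ((j - a).factorial * ((b - j).factorial *
          ((diffs (b :: c :: l₂')).map Nat.factorial).prod)) := by positivity
      exact_mod_cast this.ne'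
    have hden2 : ((P * ((b - a).factorial *
        ((diffs (b :: c :: l₂')).map Nat.factorial).prod) : ℕ) : ℚ) ≠ 0 := by
      have : 0 < P * ((b - a).factorial *
          ((diffs (b :: c :: l₂')).map Nat.factorial).prod) := by positivity
      exact_mod_cast this.ne'
    rw [← mul_div_assoc, div_eq_div_iff hden1 hden2]
    push_cast
    rw [keyQ]
    ring


variable {α : Type*} {M : Matroid α}



variable {α : Type*} {M : Matroid α}

/-- the type of chains of flats with rank set `K`. -/
def ChainT (M : Matroid α) (K : Finset ℕ) :=
  {F : K → Set α // StrictMono F ∧ ∀ j : K, M.IsFlat (F j) ∧ mrank M (F j) = (j : ℕ)}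

lemma flagCount_eq (M : Matroid α) (K : Finset ℕ) : flagCount M K = Nat.card (ChainT M K) := rfl

lemma closure_flat (M : Matroid α) (X : Set α) : M.IsFlat (M.closure X) := by
  rw [Matroid.closure_def]
  have hne : Nonempty ↥{F | M.IsFlat F ∧ X ∩ M.E ⊆ F} :=
    ⟨⟨M.E, M.ground_isFlat, Set.inter_subset_right⟩⟩
  rw [Set.sInter_eq_iInter]
  exact Matroid.IsFlat.iInter (fun F => F.2.1)

lemma chainT_finite (hfin : M.Finite) (K : Finset ℕ) : Finite (ChainT M K) := by
  classical
  have hE : ({S : Set α | S ⊆ M.E}).Finite := Set.Finite.finite_subsets hfin.ground_finite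
  haveI : Finite ↥{S : Set α | S ⊆ M.E} := hE.to_subtype
  haveI : Finite (↥K → ↥{S : Set α | S ⊆ M.E}) := Pi.finite
  apply Finite.of_injective (f := fun (c : ChainT M K) (k : ↥K) =>
    (⟨c.1 k, (c.2.2 k).1.subset_ground⟩ : ↥{S : Set α | S ⊆ M.E}))
  intro c₁ c₂ h
  apply Subtype.ext
  funext k
  exact congrArg Subtype.val (congrFun h k)


variable {α : Type*} {M : Matroid α} {d j a b : ℕ} {J : Finset ℕ}

lemma fiber_bound (hfin : M.Finite) (hrk : mrank M M.E = d + 1)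
    (hJd : ∀ x ∈ J, 1 ≤ x ∧ x ≤ d) (hj1 : 1 ≤ j) (hjd : j ≤ d) (hjJ : j ∉ J)
    (haJ : a ∈ insert 0 J) (haj : a < j)
    (hamax : ∀ x ∈ insert 0 J, x < j → x ≤ a)
    (hbJ : b ∈ insert (d+2) J) (hjb : j < b)
    (hbmin : ∀ x ∈ insert (d+2) J, j < x → b ≤ x)
    (c : ChainT M J) :
    Nat.choose (min (d+1) b - a) (j - a) ≤
      Nat.card {F : ChainT M (insert j J) //
        (fun k : ↥J => F.1 ⟨k.1, Finset.mem_insert_of_mem k.2⟩) = c.1} := by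
  classical
  -- the flats below and above the new rank j
  set Fa : Set α := if h : a ∈ J then c.1 ⟨a, h⟩ else M.closure ∅ with hFa
  set Fb : Set α := if h : b ∈ J then c.1 ⟨b, h⟩ else M.E with hFb
  have ha0 : a ∉ J → a = 0 := by
    intro h; rcases Finset.mem_insert.mp haJ with h' | h'
    · exact h'
    · exact absurd h' h
  have hbtop : b ∉ J → b = d + 2 := by
    intro h; rcases Finset.mem_insert.mp hbJ with h' | h'
    · exact h'
    · exact absurd h' h
  have hFaflat : M.IsFlat Fa := by
    rw [hFa]; split
    · exact (c.2.2 _).1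
    · exact closure_flat M ∅
  have hFbflat : M.IsFlat Fb := by
    rw [hFb]; split
    · exact (c.2.2 _).1
    · exact M.ground_isFlat
  have hFarank : mrank M Fa = a := by
    rw [hFa]; split
    · exact (c.2.2 _).2
    · next h => rw [mrank_closure_empty hfin, ha0 h]
  have hFbrank : mrank M Fb = min (d+1) b := by
    rw [hFb]; split
    · next h =>
      have : b ≤ d := (hJd b h).2
      rw [(c.2.2 _).2]; simp; omega
    · next h => rw [hrk, hbtop h]; omega
  have hFaFb : Fa ⊆ Fb := by
    by_cases ha' : a ∈ J <;> by_cases hb' : b ∈ J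
    · rw [hFa, hFb, dif_pos ha', dif_pos hb']
      have : a < b := haj.trans hjb
      exact le_of_lt (c.2.1 (show (⟨a, ha'⟩ : ↥J) < ⟨b, hb'⟩ from Subtype.mk_lt_mk.mpr this))
    · rw [hFa, hFb, dif_pos ha', dif_neg hb']
      exact (c.2.2 _).1.subset_ground
    · rw [hFa, hFb, dif_neg ha', dif_pos hb']
      have h1 : M.closure ∅ ⊆ M.closure (c.1 ⟨b, hb'⟩) :=
        M.closure_subset_closure (Set.empty_subset _)
      rwa [(c.2.2 _).1.closure] at h1
    · rw [hFa, hFb, dif_neg ha', dif_neg hb']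
      exact (closure_flat M ∅).subset_ground
  obtain ⟨Ia, hIa⟩ := M.exists_isBasis Fa hFaflat.subset_ground
  obtain ⟨Ib, hIb, hIab⟩ := hIa.indep.subset_isBasis_of_subset (hIa.subset.trans hFaFb)
    hFbflat.subset_ground
  have hIacard : Ia.ncard = a := by rw [← mrank_basis hfin hIa, hFarank]
  have hIbcard : Ib.ncard = min (d+1) b := by rw [← mrank_basis hfin hIb, hFbrank]
  have hIbfin : Ib.Finite := indep_finite hfin hIb.indep
  have hIafin : Ia.Finite := hIbfin.subset hIab
  have hΔfin : (Ib \ Ia).Finite := hIbfin.diff (t := Ia)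
  have hΔcard : hΔfin.toFinset.card = min (d+1) b - a := by
    rw [← Set.ncard_eq_toFinset_card _ hΔfin, Set.ncard_diff hIab hIafin, hIacard, hIbcard]
  -- the injection from subsets of size j - a
  set PC := hΔfin.toFinset.powersetCard (j - a) with hPC
  have hcard : PC.card = Nat.choose (min (d+1) b - a) (j - a) := by
    rw [hPC, Finset.card_powersetCard, hΔcard]
  -- the target type is finite
  haveI : Finite (ChainT M (insert j J)) := chainT_finite hfin _
  haveI : Finite {F : ChainT M (insert j J) //
      (fun k : ↥J => F.1 ⟨k.1, Finset.mem_insert_of_mem k.2⟩) = c.1} :=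
    Subtype.finite
  -- construct the map
  have hmain : ∀ T : {T : Finset α // T ∈ PC}, ∃ F : ChainT M (insert j J),
      ((fun k : ↥J => F.1 ⟨k.1, Finset.mem_insert_of_mem k.2⟩) = c.1) ∧
      F.1 ⟨j, Finset.mem_insert_self _ _⟩ = M.closure (Ia ∪ ↑T.1) := by
    rintro ⟨T, hT⟩
    obtain ⟨hTsub, hTcard⟩ := Finset.mem_powersetCard.mp hT
    have hTΔ : ↑T ⊆ Ib \ Ia := by
      intro x hx; exact hΔfin.mem_toFinset.mp (hTsub hx)
    have hdisj : Disjoint Ia (↑T : Set α) :=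
      Set.disjoint_of_subset_right hTΔ Set.disjoint_sdiff_right
    set S : Set α := Ia ∪ ↑T with hS
    have hSsub : S ⊆ Ib := Set.union_subset hIab (hTΔ.trans Set.diff_subset)
    have hSindep : M.Indep S := hIb.indep.subset hSsub
    have hScard : S.ncard = j := by
      rw [hS, Set.ncard_union_eq hdisj hIafin (T.finite_toSet), hIacard,
        Set.ncard_coe_finset, hTcard]
      omega
    set G : Set α := M.closure S with hG
    have hGflat : M.IsFlat G := closure_flat M S
    have hGrank : mrank M G = j := by rw [hG, mrank_closure_indep hfin hSindep, hScard]
    have hFaG : Fa ⊆ G := by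
      have h1 : M.closure Ia ⊆ M.closure S := M.closure_subset_closure Set.subset_union_left
      rwa [flat_closure_eq hFaflat hIa] at h1
    have hGFb : G ⊆ Fb := by
      have h1 : M.closure S ⊆ M.closure Ib := M.closure_subset_closure hSsub
      rwa [flat_closure_eq hFbflat hIb] at h1
    -- the extended chain
    refine ⟨⟨fun k => if h : k.1 ∈ J then c.1 ⟨k.1, h⟩ else G, ?_, ?_⟩, ?_, ?_⟩
    · -- strict mono
      rintro k l hkl
      have hkl' : k.1 < l.1 := hkl
      have lemA : ∀ (x : ℕ) (hx : x ∈ J), x < j → c.1 ⟨x, hx⟩ ⊆ Fa := by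
        intro x hx hxj
        have hxa : x ≤ a := hamax x (Finset.mem_insert_of_mem hx) hxj
        rcases eq_or_lt_of_le hxa with rfl | hlt
        · rw [hFa, dif_pos hx]
        · have haJ' : a ∈ J := by
            rcases Finset.mem_insert.mp haJ with rfl | h
            · exact absurd hlt (by omega)
            · exact h
          rw [hFa, dif_pos haJ']
          exact le_of_lt (c.2.1 (show (⟨x, hx⟩ : ↥J) < ⟨a, haJ'⟩ from Subtype.mk_lt_mk.mpr hlt))
      have lemB : ∀ (x : ℕ) (hx : x ∈ J), j < x → Fb ⊆ c.1 ⟨x, hx⟩ := by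
        intro x hx hjx
        have hbx : b ≤ x := hbmin x (Finset.mem_insert_of_mem hx) hjx
        rcases eq_or_lt_of_le hbx with rfl | hlt
        · rw [hFb, dif_pos hx]
        · have hbJ' : b ∈ J := by
            rcases Finset.mem_insert.mp hbJ with rfl | h
            · have := (hJd x hx).2; omega
            · exact h
          rw [hFb, dif_pos hbJ']
          exact le_of_lt (c.2.1 (show (⟨b, hbJ'⟩ : ↥J) < ⟨x, hx⟩ from Subtype.mk_lt_mk.mpr hlt))
      by_cases hk : k.1 ∈ J <;> by_cases hl : l.1 ∈ J
      · simp only [dif_pos hk, dif_pos hl]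
        exact c.2.1 (show (⟨k.1, hk⟩ : ↥J) < ⟨l.1, hl⟩ from Subtype.mk_lt_mk.mpr hkl')
      · have hlj : l.1 = j := by
          rcases Finset.mem_insert.mp l.2 with h | h
          · exact h
          · exact absurd h hl
        simp only [dif_pos hk, dif_neg hl]
        refine HasSubset.Subset.ssubset_of_ne ((lemA k.1 hk (by omega)).trans hFaG) ?_
        intro heq
        have h1 : mrank M (c.1 ⟨k.1, hk⟩) = k.1 := (c.2.2 ⟨k.1, hk⟩).2
        rw [heq, hGrank] at h1
        omega
      · have hkj : k.1 = j := by
          rcases Finset.mem_insert.mp k.2 with h | h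
          · exact h
          · exact absurd h hk
        simp only [dif_neg hk, dif_pos hl]
        refine HasSubset.Subset.ssubset_of_ne (hGFb.trans (lemB l.1 hl (by omega))) ?_
        intro heq
        have h1 : mrank M (c.1 ⟨l.1, hl⟩) = l.1 := (c.2.2 ⟨l.1, hl⟩).2
        rw [← heq, hGrank] at h1
        omega
      · exfalso
        have hkj : k.1 = j := by
          rcases Finset.mem_insert.mp k.2 with h | h
          · exact h
          · exact absurd h hk
        have hlj : l.1 = j := by
          rcases Finset.mem_insert.mp l.2 with h | h
          · exact h
          · exact absurd h hl
        omega
    · -- flats and ranks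
      rintro k
      by_cases hk : k.1 ∈ J
      · simp only [dif_pos hk]
        exact ⟨(c.2.2 ⟨k.1, hk⟩).1, (c.2.2 ⟨k.1, hk⟩).2⟩
      · have hkj : k.1 = j := by
          rcases Finset.mem_insert.mp k.2 with h | h
          · exact h
          · exact absurd h hk
        simp only [dif_neg hk]
        exact ⟨hGflat, by rw [hGrank, hkj]⟩
    · -- restriction is c
      funext k
      simp only [dif_pos k.2]
    · -- value at j
      simp only [dif_neg hjJ]
  -- turn hmain into an injection
  choose Φ hΦres hΦval using hmain
  have hinj : Function.Injective (fun T : {T : Finset α // T ∈ PC} =>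
      (⟨Φ T, hΦres T⟩ : {F : ChainT M (insert j J) //
        (fun k : ↥J => F.1 ⟨k.1, Finset.mem_insert_of_mem k.2⟩) = c.1})) := by
    rintro T₁ T₂ h
    have hΦeq : Φ T₁ = Φ T₂ := congrArg Subtype.val h
    have hval : M.closure (Ia ∪ ↑T₁.1) = M.closure (Ia ∪ ↑T₂.1) := by
      rw [← hΦval T₁, ← hΦval T₂, hΦeq]
    have hsub : ∀ T : {T : Finset α // T ∈ PC}, (Ia ∪ ↑T.1 : Set α) ⊆ Ib := by
      rintro ⟨T, hT⟩
      obtain ⟨hTsub, -⟩ := Finset.mem_powersetCard.mp hT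
      refine Set.union_subset hIab ?_
      intro x hx
      exact ((hΔfin.mem_toFinset.mp (hTsub hx))).1
    have hSeq : (Ia ∪ ↑T₁.1 : Set α) = Ia ∪ ↑T₂.1 := by
      have e1 := hIb.indep.closure_inter_eq_self_of_subset (hsub T₁)
      have e2 := hIb.indep.closure_inter_eq_self_of_subset (hsub T₂)
      rw [← e1, ← e2, hval]
    have hT1Δ : Disjoint Ia (↑T₁.1 : Set α) := by
      obtain ⟨hTsub, -⟩ := Finset.mem_powersetCard.mp T₁.2
      exact Set.disjoint_of_subset_right
        (fun x hx => hΔfin.mem_toFinset.mp (hTsub hx)) Set.disjoint_sdiff_right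
    have hT2Δ : Disjoint Ia (↑T₂.1 : Set α) := by
      obtain ⟨hTsub, -⟩ := Finset.mem_powersetCard.mp T₂.2
      exact Set.disjoint_of_subset_right
        (fun x hx => hΔfin.mem_toFinset.mp (hTsub hx)) Set.disjoint_sdiff_right
    have : (↑T₁.1 : Set α) = ↑T₂.1 := by
      have e1 : ((Ia ∪ ↑T₁.1) \ Ia : Set α) = ↑T₁.1 := by
        rw [Set.union_diff_left, hT1Δ.symm.sdiff_eq_left]
      have e2 : ((Ia ∪ ↑T₂.1) \ Ia : Set α) = ↑T₂.1 := by
        rw [Set.union_diff_left, hT2Δ.symm.sdiff_eq_left]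
      rw [← e1, ← e2, hSeq]
    exact Subtype.ext (Finset.coe_injective this)
  calc Nat.choose (min (d+1) b - a) (j - a) = PC.card := hcard.symm
    _ = Nat.card {T : Finset α // T ∈ PC} := by
        rw [Nat.card_eq_fintype_card, Fintype.card_coe]
    _ ≤ _ := Nat.card_le_card_of_injective _ hinj


variable {α : Type*} {M : Matroid α} {d j a b : ℕ} {J : Finset ℕ}

lemma flag_step (hfin : M.Finite) (hrk : mrank M M.E = d + 1)
    (hJd : ∀ x ∈ J, 1 ≤ x ∧ x ≤ d) (hj1 : 1 ≤ j) (hjd : j ≤ d) (hjJ : j ∉ J)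
    (haJ : a ∈ insert 0 J) (haj : a < j)
    (hamax : ∀ x ∈ insert 0 J, x < j → x ≤ a)
    (hbJ : b ∈ insert (d+2) J) (hjb : j < b)
    (hbmin : ∀ x ∈ insert (d+2) J, j < x → b ≤ x) :
    flagCount M J * Nat.choose (min (d+1) b - a) (j - a) ≤ flagCount M (insert j J) := by
  classical
  haveI : Finite (ChainT M J) := chainT_finite hfin J
  haveI : Finite (ChainT M (insert j J)) := chainT_finite hfin (insert j J)
  haveI : Fintype (ChainT M J) := Fintype.ofFinite _
  haveI : Fintype (ChainT M (insert j J)) := Fintype.ofFinite _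
  set res : ChainT M (insert j J) → ChainT M J := fun F =>
    ⟨fun k => F.1 ⟨k.1, Finset.mem_insert_of_mem k.2⟩,
     fun k l hkl => F.2.1 (Subtype.mk_lt_mk.mpr hkl),
     fun k => F.2.2 ⟨k.1, Finset.mem_insert_of_mem k.2⟩⟩ with hres
  rw [flagCount_eq, flagCount_eq, Nat.card_eq_fintype_card, Nat.card_eq_fintype_card]
  have hsum : Fintype.card (ChainT M (insert j J)) =
      ∑ c : ChainT M J, (Finset.univ.filter (fun F => res F = c)).card := by
    rw [← Finset.card_univ]
    exact Finset.card_eq_sum_card_fiberwise (fun F _ => Finset.mem_univ (res F))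
  rw [hsum]
  have hbd : ∀ c : ChainT M J,
      Nat.choose (min (d+1) b - a) (j - a) ≤ (Finset.univ.filter (fun F => res F = c)).card := by
    intro c
    have h1 := fiber_bound hfin hrk hJd hj1 hjd hjJ haJ haj hamax hbJ hjb hbmin c
    have h2 : Nat.card {F : ChainT M (insert j J) //
        (fun k : ↥J => F.1 ⟨k.1, Finset.mem_insert_of_mem k.2⟩) = c.1} =
        (Finset.univ.filter (fun F => res F = c)).card := by
      rw [Nat.card_eq_fintype_card]
      rw [Fintype.card_subtype]
      congr 1
      apply Finset.filter_congr
      intro F _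
      constructor
      · intro h
        exact Subtype.ext h
      · intro h
        exact congrArg Subtype.val h
    omega
  calc Fintype.card (ChainT M J) * Nat.choose (min (d+1) b - a) (j - a)
      = ∑ _c : ChainT M J, Nat.choose (min (d+1) b - a) (j - a) := by
        rw [Finset.sum_const, Finset.card_univ, smul_eq_mul]
    _ ≤ ∑ c : ChainT M J, (Finset.univ.filter (fun F => res F = c)).card :=
        Finset.sum_le_sum (fun c _ => hbd c)


variable {α : Type*} {M : Matroid α} {d j : ℕ} {J : Finset ℕ}

lemma step_ineq (hfin : M.Finite) (hrk : mrank M M.E = d + 1)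
    (hJd : ∀ x ∈ J, 1 ≤ x ∧ x ≤ d) (hj1 : 1 ≤ j) (hjd : j ≤ d) (hjJ : j ∉ J) :
    (flagCount M J : ℚ) * boolFlagCount d (insert j J) ≤
      (flagCount M (insert j J) : ℚ) * boolFlagCount d J := by
  classical
  have hane : ((insert 0 J).filter (fun x => x < j)).Nonempty :=
    ⟨0, Finset.mem_filter.mpr ⟨Finset.mem_insert_self _ _, by omega⟩⟩
  have hbne : ((insert (d+2) J).filter (fun x => j < x)).Nonempty :=
    ⟨d+2, Finset.mem_filter.mpr ⟨Finset.mem_insert_self _ _, by omega⟩⟩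
  set a := ((insert 0 J).filter (fun x => x < j)).max' hane with hadef
  set b := ((insert (d+2) J).filter (fun x => j < x)).min' hbne with hbdef
  have haJ : a ∈ insert 0 J := (Finset.mem_filter.mp (Finset.max'_mem _ hane)).1
  have haj : a < j := (Finset.mem_filter.mp (Finset.max'_mem _ hane)).2
  have hamax : ∀ x ∈ insert 0 J, x < j → x ≤ a := fun x hx hxj =>
    Finset.le_max' ((insert 0 J).filter (fun x => x < j)) x (Finset.mem_filter.mpr ⟨hx, hxj⟩)
  have hbJ : b ∈ insert (d+2) J := (Finset.mem_filter.mp (Finset.min'_mem _ hbne)).1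
  have hjb : j < b := (Finset.mem_filter.mp (Finset.min'_mem _ hbne)).2
  have hbmin : ∀ x ∈ insert (d+2) J, j < x → b ≤ x := fun x hx hxj =>
    Finset.min'_le ((insert (d+2) J).filter (fun x => j < x)) x (Finset.mem_filter.mpr ⟨hx, hxj⟩)
  rw [bool_step hJd hj1 hjd hjJ haJ haj hbJ hjb hamax hbmin]
  have hflag := flag_step hfin hrk hJd hj1 hjd hjJ haJ haj hamax hbJ hjb hbmin
  have hU := bool_pos d J
  calc (flagCount M J : ℚ) * ((Nat.choose (min (d+1) b - a) (j-a) : ℚ) * boolFlagCount d J)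
      = ((flagCount M J * Nat.choose (min (d+1) b - a) (j-a) : ℕ) : ℚ) * boolFlagCount d J := by
        push_cast; ring
    _ ≤ (flagCount M (insert j J) : ℚ) * boolFlagCount d J := by
        apply mul_le_mul_of_nonneg_right _ hU.le
        exact_mod_cast hflag

end S12

theorem stmt12 {α : Type*} (d : ℕ) (M : Matroid α) (hfin : M.Finite) (hloop : MLoopless M)
    (hrk : mrank M M.E = d + 1) (J J' : Finset ℕ)
    (hJ' : J' ⊆ Finset.Icc 1 d) (hsub : J ⊆ J') :
    (flagCount M J : ℚ) * boolFlagCount d J' ≤ (flagCount M J' : ℚ) * boolFlagCount d J := by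
  classical
  have hJ'd : ∀ x ∈ J', 1 ≤ x ∧ x ≤ d := fun x hx => by
    have := Finset.mem_Icc.mp (hJ' hx); omega
  have main : ∀ n (K : Finset ℕ), K ⊆ J' → (J' \ K).card = n →
      (flagCount M K : ℚ) * boolFlagCount d J' ≤ (flagCount M J' : ℚ) * boolFlagCount d K := by
    intro n
    induction n using Nat.strong_induction_on with
    | _ n ih =>
      intro K hKsub hKcard
      rcases Nat.eq_zero_or_pos n with rfl | hn
      · have : J' \ K = ∅ := Finset.card_eq_zero.mp hKcard
        have hKJ : K = J' := Finset.Subset.antisymm hKsub (Finset.sdiff_eq_empty_iff_subset.mp this)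
        rw [hKJ]
      · have hne : (J' \ K).Nonempty := Finset.card_pos.mp (by omega)
        obtain ⟨j, hj⟩ := hne
        have hjJ' : j ∈ J' := (Finset.mem_sdiff.mp hj).1
        have hjK : j ∉ K := (Finset.mem_sdiff.mp hj).2
        set K' := insert j K with hK'
        have hK'sub : K' ⊆ J' := Finset.insert_subset hjJ' hKsub
        have hK'card : (J' \ K').card = n - 1 := by
          rw [hK', Finset.sdiff_insert, Finset.card_erase_of_mem hj, hKcard]
        have h2 := ih (n-1) (by omega) K' hK'sub hK'card
        have hKd : ∀ x ∈ K, 1 ≤ x ∧ x ≤ d := fun x hx => hJ'd x (hKsub hx)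
        have h1 := S12.step_ineq hfin hrk hKd (hJ'd j hjJ').1 (hJ'd j hjJ').2 hjK
        rw [← hK'] at h1
        by_cases hNK : (flagCount M K' : ℚ) = 0
        · rw [hNK] at h1 h2
          have hUK' := S12.bool_pos d K'
          have hNJ : (flagCount M K : ℚ) = 0 := by
            have hnn : (0:ℚ) ≤ (flagCount M K : ℚ) := Nat.cast_nonneg _
            nlinarith
          rw [hNJ, zero_mul]
          exact mul_nonneg (Nat.cast_nonneg _) (S12.bool_pos d K).le
        · have hpos : 0 < (flagCount M K' : ℚ) :=
            lt_of_le_of_ne (Nat.cast_nonneg _) (Ne.symm hNK)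
          have hUK' := S12.bool_pos d K'
          have hUK := S12.bool_pos d K
          have hUJ' := S12.bool_pos d J'
          have hc1 : (0:ℚ) ≤ (flagCount M K' : ℚ) * boolFlagCount d J' :=
            mul_nonneg (Nat.cast_nonneg _) hUJ'.le
          have hc2 : (0:ℚ) ≤ (flagCount M K' : ℚ) * boolFlagCount d K :=
            mul_nonneg (Nat.cast_nonneg _) hUK.le
          have hprod := mul_le_mul h1 h2 hc1 hc2
          have hn1 : (0:ℚ) ≤ (flagCount M K : ℚ) := Nat.cast_nonneg _
          have hn2 : (0:ℚ) ≤ (flagCount M J' : ℚ) := Nat.cast_nonneg _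
          nlinarith [mul_pos hpos hUK', hn1, hn2]
  exact main (J' \ J).card J hsub rfl
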